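/- Fix k ≥ 1 with k ≤ |V|. Let S^(0) = ∅ and, for i = 1, …, k, let S^(i) = S^(i−1) ∪ {v^(i)} where v^(i) is any node of V \ S^(i−1) maximizing f^corr(S^(i−1) ∪ {v}) over v ∈ V \ S^(i−1). Then the greedy output S^g_corr := S^(k) satisfies f^corr(S^g_corr) ≥ (1 − 1/e) · max_{S ⊆ V, |S| ≤ k} f^corr(S). -/

import Mathlib

open scoped BigOperators

namespace CorrIM

variable {V : Type*} [Fintype V] [DecidableEq V]

/-- A node `i` is influenced: `i ∈ S`, or `i` is reachable from some node of `S`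
along the live edges of the scenario `c`. -/
def influenced (c : Finset (V × V)) (S : Finset V) (i : V) : Prop :=
  ∃ s ∈ S, Relation.ReflTransGen (fun a b : V => (a, b) ∈ c) s i

/-- `R c S` : the number of influenced nodes in scenario `c` with seed set `S`. -/
noncomputable def R (c : Finset (V × V)) (S : Finset V) : ℕ :=
  Set.ncard {i : V | influenced c S i}

/-- The Fréchet class `Θ` : probability distributions on scenarios (subsets of `E`)
whose marginals agree with the edge likelihoods `p`. -/
def memTheta (E : Finset (V × V)) (p : V × V → ℝ) (θ : Finset (V × V) → ℝ) : Prop :=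
  (∀ c, 0 ≤ θ c) ∧ (∀ c, θ c ≠ 0 → c ⊆ E) ∧ (∑ c : Finset (V × V), θ c) = 1 ∧
    ∀ e ∈ E, (∑ c : Finset (V × V), if e ∈ c then θ c else 0) = p e

/-- Expected number of influenced nodes under the distribution `θ`. -/
noncomputable def expInf (θ : Finset (V × V) → ℝ) (S : Finset V) : ℝ :=
  ∑ c : Finset (V × V), θ c * (R c S : ℝ)

/-- The correlation robust influence function `f^corr`. -/
noncomputable def fcorr (E : Finset (V × V)) (p : V × V → ℝ) (S : Finset V) : ℝ :=
  sInf {x : ℝ | ∃ θ, memTheta E p θ ∧ x = expInf θ S}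

open Classical in
/-- Probability of the event `A` under the distribution `θ`. -/
noncomputable def prob (θ : Finset (V × V) → ℝ) (A : Finset (V × V) → Prop) : ℝ :=
  ∑ c : Finset (V × V), if A c then θ c else 0

/-- `γ` (a list of nodes `i₀, i₁, …, i_λ`, `λ ≥ 1`) is a directed path from the
seed set `S` to the node `i` using edges of `E`. -/
def IsPathFrom (E : Finset (V × V)) (S : Finset V) (i : V) (γ : List V) : Prop :=
  2 ≤ γ.length ∧ (∃ s ∈ S, γ.head? = some s) ∧ γ.getLast? = some i ∧
    γ.Chain' (fun a b : V => (a, b) ∈ E)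

/-- The list of edges `(i₀,i₁), …, (i_{λ-1}, i_λ)` of a path `γ = [i₀, …, i_λ]`. -/
def pathEdges (γ : List V) : List (V × V) := γ.zip γ.tail

/-- The weight `L(γ) = 1 - ∑_{l=1}^{λ} (1 - p(i_{l-1}, i_l))` of a path. -/
noncomputable def L (p : V × V → ℝ) (γ : List V) : ℝ :=
  1 - ((pathEdges γ).map (fun e => 1 - p e)).sum

/-- `π*_i = max(0, max_{γ ∈ Γ(S,i)} L(γ))`, with value `0` when `Γ(S,i) = ∅`. -/
noncomputable def piStar (E : Finset (V × V)) (p : V × V → ℝ) (S : Finset V) (i : V) : ℝ :=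
  sSup (insert 0 {x : ℝ | ∃ γ : List V, IsPathFrom E S i γ ∧ x = L p γ})

/-- The independent cascade distribution `θ_ic` : each edge of `E` is live
independently with probability `p e`. -/
noncomputable def thetaIC (E : Finset (V × V)) (p : V × V → ℝ) (c : Finset (V × V)) : ℝ :=
  if c ⊆ E then (∏ e ∈ c, p e) * ∏ e ∈ E \ c, (1 - p e) else 0

/-- The independent cascade influence function `f^ic`. -/
noncomputable def fic (E : Finset (V × V)) (p : V × V → ℝ) (S : Finset V) : ℝ :=
  expInf (thetaIC E p) S


set_option linter.unusedSectionVars false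
set_option maxHeartbeats 1000000

section StageA
variable (E : Finset (V × V)) (p : V × V → ℝ)

lemma pathEdges_nil : pathEdges ([] : List V) = [] := rfl
lemma pathEdges_singleton (a : V) : pathEdges [a] = [] := rfl
lemma pathEdges_cons_cons (a b : V) (t : List V) :
    pathEdges (a :: b :: t) = (a, b) :: pathEdges (b :: t) := rfl

lemma chain'_cons_cons {R : V → V → Prop} {a b : V} {l : List V} :
    List.Chain' R (a :: b :: l) ↔ R a b ∧ List.Chain' R (b :: l) := List.isChain_cons_cons

lemma chain'_append' {R : V → V → Prop} {l₁ l₂ : List V} :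
    List.Chain' R (l₁ ++ l₂) ↔ List.Chain' R l₁ ∧ List.Chain' R l₂ ∧
      ∀ x ∈ l₁.getLast?, ∀ y ∈ l₂.head?, R x y := List.isChain_append

lemma chain'_pathEdges {r : V → V → Prop} :
    ∀ (γ : List V), γ.Chain' r → ∀ e ∈ pathEdges γ, r e.1 e.2
  | [] => by simp [pathEdges_nil]
  | [a] => by simp [pathEdges_singleton]
  | a :: b :: t => by
      rw [chain'_cons_cons, pathEdges_cons_cons]
      rintro ⟨hr, hc⟩ e he
      rcases List.mem_cons.1 he with rfl | he
      · exact hr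
      · exact chain'_pathEdges (b :: t) hc e he

lemma chain'_of_pathEdges {r : V → V → Prop} :
    ∀ (γ : List V), (∀ e ∈ pathEdges γ, r e.1 e.2) → γ.Chain' r
  | [] => by intro _; exact List.IsChain.nil
  | [a] => by intro _; exact List.IsChain.singleton _
  | a :: b :: t => by
      rw [chain'_cons_cons, pathEdges_cons_cons]
      intro h
      refine ⟨h (a, b) List.mem_cons_self, ?_⟩
      exact chain'_of_pathEdges (b :: t) (fun e he => h e (List.mem_cons_of_mem _ he))

lemma reflTransGen_of_chain' {r : V → V → Prop} :
    ∀ (γ : List V) (s i : V), γ.Chain' r → γ.head? = some s → γ.getLast? = some i →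
      Relation.ReflTransGen r s i
  | [], s, i => by simp
  | [a], s, i => by
      intro _ hs hi
      simp only [List.head?_cons, Option.some.injEq] at hs
      simp only [List.getLast?_singleton, Option.some.injEq] at hi
      subst hs; subst hi; exact Relation.ReflTransGen.refl
  | a :: b :: t, s, i => by
      rw [chain'_cons_cons, List.getLast?_cons_cons]
      rintro ⟨hr, hc⟩ hs hi
      simp only [List.head?_cons, Option.some.injEq] at hs
      subst hs
      exact Relation.ReflTransGen.head hr
        (reflTransGen_of_chain' (b :: t) b i hc rfl hi)

lemma pathEdges_concat :
    ∀ (γ : List V) (a b : V), γ.getLast? = some a →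
      pathEdges (γ ++ [b]) = pathEdges γ ++ [(a, b)]
  | [], a, b => by simp
  | [x], a, b => by
      intro h
      simp only [List.getLast?_singleton, Option.some.injEq] at h
      subst h; rfl
  | x :: y :: t, a, b => by
      intro h
      rw [List.getLast?_cons_cons] at h
      have IH := pathEdges_concat (y :: t) a b h
      show pathEdges (x :: y :: (t ++ [b])) = _
      rw [pathEdges_cons_cons]
      have : (y :: (t ++ [b])) = (y :: t) ++ [b] := rfl
      rw [this, IH, pathEdges_cons_cons]
      rfl

lemma pathEdges_take_sublist :
    ∀ (γ : List V) (n : ℕ), (pathEdges (γ.take n)).Sublist (pathEdges γ)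
  | [], n => by simp [pathEdges_nil]
  | a :: t, 0 => by simp [pathEdges_nil]
  | [a], n + 1 => by simp
  | a :: b :: t, 1 => by
      simp [pathEdges_singleton, pathEdges_cons_cons]
  | a :: b :: t, (n + 2) => by
      show (pathEdges (a :: b :: t.take n)).Sublist _
      rw [pathEdges_cons_cons, pathEdges_cons_cons]
      exact (pathEdges_take_sublist (b :: t) (n + 1)).cons₂ _

end StageA

section StageB

variable (E : Finset (V × V)) (p : V × V → ℝ)

/-- The weight (sum of `1 - p e`) of a path. -/
noncomputable def wt (γ : List V) : ℝ := ((pathEdges γ).map (fun e => 1 - p e)).sum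

/-- Paths (node-lists, no repeats) from the seed set `S` to node `i` along edges of `E`. -/
def PathSet (S : Finset V) (i : V) : Set (List V) :=
  {γ | (∃ s ∈ S, γ.head? = some s) ∧ γ.getLast? = some i ∧
    γ.Chain' (fun a b : V => (a, b) ∈ E) ∧ γ.Nodup}

lemma PathSet_finite (S : Finset V) (i : V) : (PathSet E S i).Finite :=
  (List.finite_length_le V (Fintype.card V)).subset (fun γ hγ => hγ.2.2.2.length_le_card)

open scoped Classical in
/-- Shortest-path distance from `S` to `i` (value `card V + 1` if unreachable). -/
noncomputable def dd (S : Finset V) (i : V) : ℝ :=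
  if h : (PathSet E S i).Nonempty then sInf (wt p '' PathSet E S i)
  else (Fintype.card V + 1 : ℝ)

variable {E p}

lemma wt_nonneg (hp : ∀ e ∈ E, 0 ≤ p e ∧ p e ≤ 1) {γ : List V}
    (hc : γ.Chain' (fun a b : V => (a, b) ∈ E)) : 0 ≤ wt p γ := by
  apply List.sum_nonneg
  intro x hx
  obtain ⟨e, he, rfl⟩ := List.mem_map.1 hx
  have heE := chain'_pathEdges γ hc e he
  linarith [(hp e heE).2]

lemma wt_le_card (hp : ∀ e ∈ E, 0 ≤ p e ∧ p e ≤ 1) {γ : List V}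
    (hc : γ.Chain' (fun a b : V => (a, b) ∈ E)) : wt p γ ≤ (γ.length : ℝ) := by
  have h1 : ∀ x ∈ (pathEdges γ).map (fun e => 1 - p e), x ≤ (1 : ℝ) := by
    intro x hx
    obtain ⟨e, he, rfl⟩ := List.mem_map.1 hx
    have heE := chain'_pathEdges γ hc e he
    linarith [(hp e heE).1]
  calc wt p γ ≤ ((pathEdges γ).map (fun e => 1 - p e)).length • (1 : ℝ) :=
        List.sum_le_card_nsmul _ _ h1
    _ = ((pathEdges γ).length : ℝ) := by simp
    _ ≤ (γ.length : ℝ) := by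
        simp only [pathEdges, List.length_zip]
        exact_mod_cast Nat.min_le_left _ _

lemma dd_le {S : Finset V} {i : V} {γ : List V} (hγ : γ ∈ PathSet E S i) :
    dd E p S i ≤ wt p γ := by
  rw [dd, dif_pos ⟨γ, hγ⟩]
  exact csInf_le ((PathSet_finite E S i).image _).bddBelow ⟨γ, hγ, rfl⟩

lemma dd_attain {S : Finset V} {i : V} (h : (PathSet E S i).Nonempty) :
    ∃ γ ∈ PathSet E S i, wt p γ = dd E p S i := by
  rw [dd, dif_pos h]
  have := (h.image (wt p)).csInf_mem ((PathSet_finite E S i).image _)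
  obtain ⟨γ, hγ, hw⟩ := this
  exact ⟨γ, hγ, hw⟩

lemma dd_nonneg (hp : ∀ e ∈ E, 0 ≤ p e ∧ p e ≤ 1) (S : Finset V) (i : V) :
    0 ≤ dd E p S i := by
  by_cases h : (PathSet E S i).Nonempty
  · obtain ⟨γ, hγ, hw⟩ := dd_attain h
    rw [← hw]; exact wt_nonneg hp hγ.2.2.1
  · rw [dd, dif_neg h]; positivity

lemma dd_le_bound (hp : ∀ e ∈ E, 0 ≤ p e ∧ p e ≤ 1) (S : Finset V) (i : V) :
    dd E p S i ≤ (Fintype.card V + 1 : ℝ) := by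
  by_cases h : (PathSet E S i).Nonempty
  · obtain ⟨γ, hγ, hw⟩ := dd_attain h
    rw [← hw]
    have hlen : (γ.length : ℝ) ≤ (Fintype.card V : ℝ) := by
      exact_mod_cast hγ.2.2.2.length_le_card
    linarith [wt_le_card hp hγ.2.2.1 (γ := γ)]
  · rw [dd, dif_neg h]

lemma dd_eq_zero (hp : ∀ e ∈ E, 0 ≤ p e ∧ p e ≤ 1) {S : Finset V} {s : V} (hs : s ∈ S) :
    dd E p S s = 0 := by
  have hmem : [s] ∈ PathSet E S s := by
    refine ⟨⟨s, hs, rfl⟩, rfl, ?_, ?_⟩ <;> simp [List.Chain']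
  have h1 : dd E p S s ≤ wt p [s] := dd_le hmem
  have h2 : wt p [s] = 0 := by simp [wt, pathEdges_singleton]
  have := dd_nonneg hp S s
  linarith [h1, h2 ▸ h1]

lemma dd_of_not_nonempty {S : Finset V} {i : V} (h : ¬(PathSet E S i).Nonempty) :
    dd E p S i = (Fintype.card V + 1 : ℝ) := by rw [dd, dif_neg h]

lemma dd_anti (hp : ∀ e ∈ E, 0 ≤ p e ∧ p e ≤ 1) {S T : Finset V} (hST : S ⊆ T) (i : V) :
    dd E p T i ≤ dd E p S i := by
  by_cases h : (PathSet E S i).Nonempty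
  · obtain ⟨γ, hγ, hw⟩ := dd_attain h
    rw [← hw]
    apply dd_le
    obtain ⟨⟨s, hsS, hhead⟩, h2, h3, h4⟩ := hγ
    exact ⟨⟨s, hST hsS, hhead⟩, h2, h3, h4⟩
  · rw [dd_of_not_nonempty h]
    exact dd_le_bound hp T i

lemma wt_sublist_le (hp : ∀ e ∈ E, 0 ≤ p e ∧ p e ≤ 1) {γ γ' : List V}
    (hc : γ.Chain' (fun a b : V => (a, b) ∈ E))
    (hsub : (pathEdges γ').Sublist (pathEdges γ)) : wt p γ' ≤ wt p γ := by
  apply List.Sublist.sum_le_sum (hsub.map _)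
  intro x hx
  obtain ⟨e, he, rfl⟩ := List.mem_map.1 hx
  have heE := chain'_pathEdges γ hc e he
  linarith [(hp e heE).2]

lemma dd_triangle (hp : ∀ e ∈ E, 0 ≤ p e ∧ p e ≤ 1) {S : Finset V} {a b : V}
    (he : (a, b) ∈ E) : dd E p S b ≤ dd E p S a + (1 - p (a, b)) := by
  have hw : (0:ℝ) ≤ 1 - p (a, b) := by linarith [(hp _ he).2]
  by_cases h : (PathSet E S a).Nonempty
  · obtain ⟨γ, hγ, hwt⟩ := dd_attain h
    obtain ⟨⟨s, hsS, hhead⟩, hlast, hchain, hnodup⟩ := hγ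
    by_cases hb : b ∈ γ
    · -- take a prefix ending at b
      obtain ⟨⟨j, hj⟩, hget⟩ := List.mem_iff_get.1 hb
      have hmem : γ.take (j + 1) ∈ PathSet E S b := by
        refine ⟨⟨s, hsS, ?_⟩, ?_, hchain.prefix (List.take_prefix _ _),
          (List.take_sublist _ _).nodup hnodup⟩
        · cases γ with
          | nil => simp at hj
          | cons x t => simpa using hhead
        · rw [List.take_succ]
          have : γ[j]? = some b := by
            rw [List.getElem?_eq_getElem hj]
            simpa using hget
          rw [this]
          simp [List.getLast?_concat]
      have hle : wt p (γ.take (j + 1)) ≤ wt p γ :=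
        wt_sublist_le hp hchain (pathEdges_take_sublist γ (j + 1))
      calc dd E p S b ≤ wt p (γ.take (j + 1)) := dd_le hmem
        _ ≤ wt p γ := hle
        _ = dd E p S a := hwt
        _ ≤ _ := by linarith
    · -- extend the path by the edge (a, b)
      have hne : γ ≠ [] := by
        intro hnil; rw [hnil] at hhead; simp at hhead
      have hmem : γ ++ [b] ∈ PathSet E S b := by
        refine ⟨⟨s, hsS, ?_⟩, ?_, ?_, ?_⟩
        · rw [List.head?_append]
          rw [hhead]; rfl
        · exact List.getLast?_concat
        · rw [chain'_append']
          refine ⟨hchain, List.isChain_singleton _, ?_⟩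
          intro x hx y hy
          rw [hlast, Option.mem_def, Option.some.injEq] at hx
          simp only [List.head?_cons, Option.mem_def, Option.some.injEq] at hy
          subst hx; subst hy; exact he
        · rw [List.nodup_append]
          refine ⟨hnodup, List.nodup_singleton _, ?_⟩
          intro x hx y hy hxy
          simp only [List.mem_singleton] at hy
          subst hy; subst hxy; exact hb hx
      have hwt' : wt p (γ ++ [b]) = wt p γ + (1 - p (a, b)) := by
        rw [wt, pathEdges_concat γ a b hlast]
        simp [wt]
      calc dd E p S b ≤ wt p (γ ++ [b]) := dd_le hmem
        _ = wt p γ + (1 - p (a, b)) := hwt'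
        _ = dd E p S a + (1 - p (a, b)) := by rw [hwt]
  · rw [dd_of_not_nonempty h]
    linarith [dd_le_bound hp S b]

end StageB
section StageC

variable (E : Finset (V × V)) (p : V × V → ℝ)

/-- Start of the "blocked" interval for edge `e`. -/
noncomputable def startPt (S : Finset V) (e : V × V) : ℝ :=
  if dd E p S e.1 < 1 then dd E p S e.1 else 0

/-- The set of times at which edge `e` is dead. -/
noncomputable def deadSet (S : Finset V) (e : V × V) : Set ℝ :=
  Set.Ico (startPt E p S e) (startPt E p S e + (1 - p e)) ∪
    Set.Ico 0 (startPt E p S e + (1 - p e) - 1)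

open scoped Classical in
/-- The worst-case scenario at time `u`. -/
noncomputable def cScen (S : Finset V) (u : ℝ) : Finset (V × V) :=
  E.filter (fun e => u ∉ deadSet E p S e)

variable {E p}

open scoped Classical in
lemma mem_cScen {S : Finset V} {u : ℝ} {e : V × V} :
    e ∈ cScen E p S u ↔ e ∈ E ∧ u ∉ deadSet E p S e := by
  simp [cScen]

lemma measurableSet_deadSet (S : Finset V) (e : V × V) :
    MeasurableSet (deadSet E p S e) :=
  measurableSet_Ico.union measurableSet_Ico

lemma dd_le_of_reach (hp : ∀ e ∈ E, 0 ≤ p e ∧ p e ≤ 1) {S : Finset V} {u : ℝ}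
    (hu0 : 0 ≤ u) (hu1 : u < 1) {s a : V} (hs : s ∈ S)
    (h : Relation.ReflTransGen (fun x y : V => (x, y) ∈ cScen E p S u) s a) :
    dd E p S a ≤ u := by
  induction h with
  | refl => rw [dd_eq_zero hp hs]; exact hu0
  | @tail b c hab hbc ih =>
    obtain ⟨hE, hdead⟩ := mem_cScen.1 hbc
    have hb1 : dd E p S b < 1 := lt_of_le_of_lt ih hu1
    have hstart : startPt E p S (b, c) = dd E p S b := by
      rw [startPt, if_pos hb1]
    simp only [deadSet, hstart, Set.mem_union, Set.mem_Ico, not_or, not_and, not_lt] at hdead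
    have : dd E p S b + (1 - p (b, c)) ≤ u := hdead.1 ih
    calc dd E p S c ≤ dd E p S b + (1 - p (b, c)) := dd_triangle hp hE
      _ ≤ u := this
end StageC


section StageD

variable {E : Finset (V × V)} {p : V × V → ℝ}

lemma reach_of_wt (hp : ∀ e ∈ E, 0 ≤ p e ∧ p e ≤ 1) {S : Finset V} {u : ℝ} (hu1 : u < 1) :
    ∀ (γ : List V) (a i : V), γ.head? = some a → γ.getLast? = some i →
      γ.Chain' (fun x y : V => (x, y) ∈ E) → dd E p S a + wt p γ ≤ u →
      Relation.ReflTransGen (fun x y : V => (x, y) ∈ cScen E p S u) a i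
  | [], a, i => by simp
  | [x], a, i => by
      intro ha hi _ _
      simp only [List.head?_cons, Option.some.injEq] at ha
      simp only [List.getLast?_singleton, Option.some.injEq] at hi
      subst ha; subst hi; exact Relation.ReflTransGen.refl
  | x :: y :: t, a, i => by
      intro ha hi hc hwt
      simp only [List.head?_cons, Option.some.injEq] at ha
      subst ha
      rw [List.getLast?_cons_cons] at hi
      rw [chain'_cons_cons] at hc
      have hwt_rest : 0 ≤ wt p (y :: t) := wt_nonneg hp hc.2
      have hwtcons : wt p (x :: y :: t) = (1 - p (x, y)) + wt p (y :: t) := by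
        simp [wt, pathEdges_cons_cons]
      have hd0 : 0 ≤ dd E p S x := dd_nonneg hp S x
      have hw0 : 0 ≤ 1 - p (x, y) := by linarith [(hp _ hc.1).2]
      have hxu : dd E p S x + (1 - p (x, y)) ≤ u := by linarith
      have hx1 : dd E p S x < 1 := by linarith
      have hlive : (x, y) ∈ cScen E p S u := by
        rw [mem_cScen]
        refine ⟨hc.1, ?_⟩
        simp only [deadSet, startPt, if_pos hx1, Set.mem_union, Set.mem_Ico, not_or,
          not_and, not_lt]
        exact ⟨fun _ => by linarith, fun _ => by linarith⟩
      have hdy : dd E p S y ≤ dd E p S x + (1 - p (x, y)) := dd_triangle hp hc.1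
      exact Relation.ReflTransGen.head hlive
        (reach_of_wt hp hu1 (y :: t) y i rfl hi hc.2 (by linarith))

lemma card_bound_ge_one : (1 : ℝ) ≤ (Fintype.card V + 1 : ℝ) := by
  have : (0:ℝ) ≤ (Fintype.card V : ℝ) := Nat.cast_nonneg _
  linarith

lemma infl_iff (hp : ∀ e ∈ E, 0 ≤ p e ∧ p e ≤ 1) {S : Finset V} {u : ℝ}
    (hu0 : 0 ≤ u) (hu1 : u < 1) (i : V) :
    influenced (cScen E p S u) S i ↔ dd E p S i ≤ u := by
  constructor
  · rintro ⟨s, hs, hrt⟩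
    exact dd_le_of_reach hp hu0 hu1 hs hrt
  · intro hdi
    have hne : (PathSet E S i).Nonempty := by
      by_contra hne
      rw [dd_of_not_nonempty hne] at hdi
      have h0 : (0:ℝ) ≤ (Fintype.card V : ℝ) := by positivity
      linarith
    obtain ⟨γ, hγ, hwt⟩ := dd_attain hne
    obtain ⟨⟨s, hsS, hhead⟩, hlast, hchain, _⟩ := hγ
    refine ⟨s, hsS, ?_⟩
    apply reach_of_wt hp hu1 γ s i hhead hlast hchain
    rw [dd_eq_zero hp hsS, hwt]
    linarith

end StageD

section StageE

variable (E : Finset (V × V)) (p : V × V → ℝ)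

/-- Worst-case influence probability of node `i`. -/
noncomputable def mfun (S : Finset V) (i : V) : ℝ := max 0 (1 - dd E p S i)

/-- The closed form of the correlation robust influence function. -/
noncomputable def gfun (S : Finset V) : ℝ := ∑ i : V, mfun E p S i

variable {E p}

lemma mfun_nonneg (S : Finset V) (i : V) : 0 ≤ mfun E p S i := le_max_left _ _

lemma mfun_le_one (hp : ∀ e ∈ E, 0 ≤ p e ∧ p e ≤ 1) (S : Finset V) (i : V) :
    mfun E p S i ≤ 1 :=
  max_le (by norm_num) (by linarith [dd_nonneg hp S i])

lemma mfun_mono (hp : ∀ e ∈ E, 0 ≤ p e ∧ p e ≤ 1) {S T : Finset V} (hST : S ⊆ T) (i : V) :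
    mfun E p S i ≤ mfun E p T i :=
  max_le_max le_rfl (by linarith [dd_anti hp hST i])

lemma gfun_nonneg (S : Finset V) : 0 ≤ gfun E p S :=
  Finset.sum_nonneg fun i _ => mfun_nonneg S i

lemma gfun_mono (hp : ∀ e ∈ E, 0 ≤ p e ∧ p e ≤ 1) {S T : Finset V} (hST : S ⊆ T) :
    gfun E p S ≤ gfun E p T :=
  Finset.sum_le_sum fun i _ => mfun_mono hp hST i

lemma mfun_cover (hp : ∀ e ∈ E, 0 ≤ p e ∧ p e ≤ 1) (S T : Finset V) (i : V) :
    mfun E p T i ≤ mfun E p S i +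
      ∑ v ∈ T \ S, (mfun E p (insert v S) i - mfun E p S i) := by
  have hterm : ∀ v ∈ T \ S, 0 ≤ mfun E p (insert v S) i - mfun E p S i := by
    intro v _
    have := mfun_mono hp (Finset.subset_insert v S) i
    linarith
  by_cases hle : mfun E p T i ≤ mfun E p S i
  · linarith [Finset.sum_nonneg hterm]
  · push_neg at hle
    have h0 : 0 ≤ mfun E p S i := mfun_nonneg S i
    have hT1 : dd E p T i < 1 := by
      by_contra h
      push_neg at h
      have : mfun E p T i = 0 := max_eq_left (by linarith)
      linarith
    have hne : (PathSet E T i).Nonempty := by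
      by_contra hne
      rw [dd_of_not_nonempty hne] at hT1
      have h0' : (0:ℝ) ≤ (Fintype.card V : ℝ) := by positivity
      linarith
    obtain ⟨γ, hγ, hwt⟩ := dd_attain hne
    obtain ⟨⟨s, hsT, hhead⟩, hlast, hchain, hnodup⟩ := hγ
    by_cases hsS : s ∈ S
    · exfalso
      have : dd E p S i ≤ wt p γ := dd_le ⟨⟨s, hsS, hhead⟩, hlast, hchain, hnodup⟩
      have h2 : mfun E p T i ≤ mfun E p S i := by
        apply max_le_max le_rfl
        rw [← hwt] at *
        linarith
      linarith
    · have hv : s ∈ T \ S := Finset.mem_sdiff.2 ⟨hsT, hsS⟩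
      have hins : dd E p (insert s S) i ≤ dd E p T i := by
        rw [← hwt]
        exact dd_le ⟨⟨s, Finset.mem_insert_self s S, hhead⟩, hlast, hchain, hnodup⟩
      have h1 : mfun E p T i ≤ mfun E p (insert s S) i :=
        max_le_max le_rfl (by linarith)
      have h2 : mfun E p (insert s S) i - mfun E p S i ≤
          ∑ v ∈ T \ S, (mfun E p (insert v S) i - mfun E p S i) :=
        Finset.single_le_sum hterm hv
      linarith

lemma gfun_cover (hp : ∀ e ∈ E, 0 ≤ p e ∧ p e ≤ 1) (S T : Finset V) :
    gfun E p T ≤ gfun E p S +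
      ∑ v ∈ T \ S, (gfun E p (insert v S) - gfun E p S) := by
  have h := Finset.sum_le_sum (fun i (_ : i ∈ (Finset.univ : Finset V)) => mfun_cover hp S T i)
  rw [Finset.sum_add_distrib, Finset.sum_comm] at h
  refine le_trans h (le_of_eq ?_)
  show gfun E p S + _ = _
  congr 1
  apply Finset.sum_congr rfl
  intro v _
  rw [Finset.sum_sub_distrib]
  rfl

end StageE


section StageF

open MeasureTheory
open scoped Classical

variable (E : Finset (V × V)) (p : V × V → ℝ)

/-- The worst-case (comonotone along shortest paths) distribution. -/
noncomputable def thetaStar (S : Finset V) (c : Finset (V × V)) : ℝ :=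
  (volume (Set.Ico (0:ℝ) 1 ∩ {u | cScen E p S u = c})).toReal

variable {E p}

lemma scenSet_empty_of_not_subset {S : Finset V} {c : Finset (V × V)} (hc : ¬ c ⊆ E) :
    {u : ℝ | cScen E p S u = c} = ∅ := by
  ext u
  simp only [Set.mem_setOf_eq, Set.mem_empty_iff_false, iff_false]
  intro h
  exact hc (h ▸ Finset.filter_subset _ _)

lemma scenSet_eq {S : Finset V} {c : Finset (V × V)} (hc : c ⊆ E) :
    {u : ℝ | cScen E p S u = c} = ⋂ e ∈ E, {u : ℝ | e ∈ c ↔ u ∉ deadSet E p S e} := by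
  ext u
  simp only [Set.mem_setOf_eq, Set.mem_iInter]
  constructor
  · intro h e heE
    rw [← h, mem_cScen]
    simp [heE]
  · intro h
    ext e
    by_cases heE : e ∈ E
    · rw [mem_cScen]
      simp only [heE, true_and]
      exact (h e heE).symm
    · simp only [mem_cScen]
      constructor
      · rintro ⟨h1, _⟩; exact absurd h1 heE
      · intro hec; exact absurd (hc hec) heE

lemma measurableSet_scenSet (S : Finset V) (c : Finset (V × V)) :
    MeasurableSet (Set.Ico (0:ℝ) 1 ∩ {u : ℝ | cScen E p S u = c}) := by
  by_cases hc : c ⊆ E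
  · rw [scenSet_eq hc]
    refine measurableSet_Ico.inter (MeasurableSet.biInter (Finset.countable_toSet E) ?_)
    intro e _
    by_cases hec : e ∈ c
    · have : {u : ℝ | e ∈ c ↔ u ∉ deadSet E p S e} = (deadSet E p S e)ᶜ := by
        ext u; simp [hec]
      rw [this]
      exact (measurableSet_deadSet S e).compl
    · have : {u : ℝ | e ∈ c ↔ u ∉ deadSet E p S e} = deadSet E p S e := by
        ext u; simp [hec]
      rw [this]
      exact measurableSet_deadSet S e
  · rw [scenSet_empty_of_not_subset hc]
    simp

lemma thetaStar_nonneg (S : Finset V) (c : Finset (V × V)) : 0 ≤ thetaStar E p S c :=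
  ENNReal.toReal_nonneg

lemma thetaStar_subset {S : Finset V} {c : Finset (V × V)} (h : thetaStar E p S c ≠ 0) :
    c ⊆ E := by
  by_contra hc
  apply h
  rw [thetaStar, scenSet_empty_of_not_subset hc]
  simp

lemma scen_vol_ne_top (A : Set ℝ) :
    volume (Set.Ico (0:ℝ) 1 ∩ A) ≠ ⊤ := by
  apply ne_top_of_le_ne_top _ (measure_mono (Set.inter_subset_left))
  rw [Real.volume_Ico]
  simp

/-- The partition identity for sums over scenarios against `thetaStar`. -/
lemma sum_thetaStar (S : Finset V) (Q : Finset (V × V) → Prop) :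
    ∑ c : Finset (V × V), (if Q c then thetaStar E p S c else 0)
      = (volume (Set.Ico (0:ℝ) 1 ∩ {u : ℝ | Q (cScen E p S u)})).toReal := by
  have hunion : Set.Ico (0:ℝ) 1 ∩ {u : ℝ | Q (cScen E p S u)}
      = ⋃ c ∈ Finset.univ.filter Q, (Set.Ico (0:ℝ) 1 ∩ {u : ℝ | cScen E p S u = c}) := by
    ext u
    simp only [Set.mem_inter_iff, Set.mem_setOf_eq, Set.mem_iUnion, Finset.mem_filter,
      Finset.mem_univ, true_and, exists_prop]
    constructor
    · rintro ⟨hu, hQ⟩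
      exact ⟨cScen E p S u, hQ, hu, rfl⟩
    · rintro ⟨c, hQ, hu, rfl⟩
      exact ⟨hu, hQ⟩
  have hdisj : (↑(Finset.univ.filter Q) : Set (Finset (V × V))).PairwiseDisjoint
      (fun c => Set.Ico (0:ℝ) 1 ∩ {u : ℝ | cScen E p S u = c}) := by
    intro c₁ _ c₂ _ hne
    apply Set.disjoint_left.2
    rintro u ⟨_, h1⟩ ⟨_, h2⟩
    exact hne (h1.symm.trans h2)
  have hmeas : ∀ c ∈ Finset.univ.filter Q,
      MeasurableSet (Set.Ico (0:ℝ) 1 ∩ {u : ℝ | cScen E p S u = c}) :=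
    fun c _ => measurableSet_scenSet S c
  rw [hunion, measure_biUnion_finset hdisj hmeas, ENNReal.toReal_sum
    (fun c _ => scen_vol_ne_top _)]
  rw [Finset.sum_filter]
  rfl

lemma sum_thetaStar_one (S : Finset V) :
    ∑ c : Finset (V × V), thetaStar E p S c = 1 := by
  have := sum_thetaStar (E := E) (p := p) S (fun _ => True)
  simp only [if_true] at this
  rw [this]
  have : {u : ℝ | True} = Set.univ := rfl
  rw [this, Set.inter_univ, Real.volume_Ico]
  norm_num

lemma startPt_mem (hp : ∀ e ∈ E, 0 ≤ p e ∧ p e ≤ 1) (S : Finset V) (e : V × V) :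
    0 ≤ startPt E p S e ∧ startPt E p S e < 1 := by
  rw [startPt]
  split_ifs with h
  · exact ⟨dd_nonneg hp S e.1, h⟩
  · norm_num

lemma vol_live (hp : ∀ e ∈ E, 0 ≤ p e ∧ p e ≤ 1) (S : Finset V) {e : V × V} (he : e ∈ E) :
    volume (Set.Ico (0:ℝ) 1 ∩ {u : ℝ | e ∈ cScen E p S u}) = ENNReal.ofReal (p e) := by
  have hs := startPt_mem hp S e
  set s := startPt E p S e with hsdef
  set w := 1 - p e with hwdef
  have hw0 : 0 ≤ w := by simp only [hwdef]; linarith [(hp e he).2]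
  have hw1 : w ≤ 1 := by simp only [hwdef]; linarith [(hp e he).1]
  have hset : Set.Ico (0:ℝ) 1 ∩ {u : ℝ | e ∈ cScen E p S u}
      = Set.Ico (0:ℝ) 1 \ deadSet E p S e := by
    ext u
    simp only [Set.mem_inter_iff, Set.mem_setOf_eq, Set.mem_diff, mem_cScen]
    tauto
  rw [hset, deadSet, ← hsdef, ← hwdef]
  by_cases h : s + w ≤ 1
  · have h2 : Set.Ico (0:ℝ) (s + w - 1) = ∅ := Set.Ico_eq_empty (by linarith)
    have h3 : Set.Ico (0:ℝ) 1 \ (Set.Ico s (s + w) ∪ Set.Ico 0 (s + w - 1))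
        = Set.Ico (0:ℝ) s ∪ Set.Ico (s + w) 1 := by
      rw [h2, Set.union_empty]
      ext u
      simp only [Set.mem_diff, Set.mem_Ico, Set.mem_union]
      constructor
      · rintro ⟨⟨h0, h1'⟩, hni⟩
        rcases lt_or_ge u s with hlt | hge
        · exact Or.inl ⟨h0, hlt⟩
        · right
          constructor
          · by_contra hlt2
            push_neg at hlt2
            exact hni ⟨hge, hlt2⟩
          · exact h1'
      · rintro (⟨h0, h1'⟩ | ⟨h0, h1'⟩)
        · exact ⟨⟨h0, by linarith⟩, fun hc => by linarith [hc.1]⟩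
        · exact ⟨⟨by linarith, h1'⟩, fun hc => by linarith [hc.2]⟩
    rw [h3, measure_union _ measurableSet_Ico]
    · rw [Real.volume_Ico, Real.volume_Ico, ← ENNReal.ofReal_add (by linarith) (by linarith)]
      congr 1
      simp only [hwdef]
      ring
    · apply Set.disjoint_left.2
      rintro u ⟨_, hu1⟩ ⟨hu2, _⟩
      linarith
  · push_neg at h
    have h3 : Set.Ico (0:ℝ) 1 \ (Set.Ico s (s + w) ∪ Set.Ico 0 (s + w - 1))
        = Set.Ico (s + w - 1) s := by
      ext u
      simp only [Set.mem_diff, Set.mem_Ico, Set.mem_union, not_or, not_and, not_lt]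
      constructor
      · rintro ⟨⟨h0, h1'⟩, hn1, hn2⟩
        refine ⟨hn2 h0, ?_⟩
        by_contra hlt
        push_neg at hlt
        linarith [hn1 hlt]
      · rintro ⟨h0, h1'⟩
        refine ⟨⟨by linarith, by linarith⟩, ?_, ?_⟩
        · intro hsu; linarith
        · intro _; linarith
    rw [h3, Real.volume_Ico]
    congr 1
    simp only [hwdef]
    ring

lemma thetaStar_marginal (hp : ∀ e ∈ E, 0 ≤ p e ∧ p e ≤ 1) (S : Finset V)
    {e : V × V} (he : e ∈ E) :
    ∑ c : Finset (V × V), (if e ∈ c then thetaStar E p S c else 0) = p e := by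
  have h := sum_thetaStar (E := E) (p := p) S (fun c => e ∈ c)
  rw [vol_live hp S he, ENNReal.toReal_ofReal (hp e he).1] at h
  rw [← h]
  exact Finset.sum_congr rfl fun c _ => by by_cases hc : e ∈ c <;> simp [hc]

lemma thetaStar_memTheta (hp : ∀ e ∈ E, 0 ≤ p e ∧ p e ≤ 1) (S : Finset V) :
    memTheta E p (thetaStar E p S) := by
  refine ⟨thetaStar_nonneg S, fun c h => thetaStar_subset h, sum_thetaStar_one S, ?_⟩
  intro e he
  have h := thetaStar_marginal hp S he
  rw [← h]

end StageF


section StageG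

open MeasureTheory
open scoped Classical

variable {E : Finset (V × V)} {p : V × V → ℝ}

lemma R_eq_sum (c : Finset (V × V)) (S : Finset V) :
    (R c S : ℝ) = ∑ i : V, (if influenced c S i then (1:ℝ) else 0) := by
  rw [R, Set.ncard_eq_toFinset_card', Set.toFinset_setOf, Finset.card_filter]
  push_cast
  apply Finset.sum_congr rfl
  intro i _
  split_ifs <;> simp

lemma R_nonneg_real (c : Finset (V × V)) (S : Finset V) : (0:ℝ) ≤ (R c S : ℝ) :=
  Nat.cast_nonneg _

lemma expInf_nonneg {θ : Finset (V × V) → ℝ} (hθ : ∀ c, 0 ≤ θ c) (S : Finset V) :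
    0 ≤ expInf θ S :=
  Finset.sum_nonneg fun c _ => mul_nonneg (hθ c) (R_nonneg_real c S)

lemma expInf_eq_sum_nodes (θ : Finset (V × V) → ℝ) (S : Finset V) :
    expInf θ S = ∑ i : V, ∑ c : Finset (V × V), (if influenced c S i then θ c else 0) := by
  rw [expInf, ← Finset.sum_comm]
  apply Finset.sum_congr rfl
  intro c _
  rw [R_eq_sum, Finset.mul_sum]
  apply Finset.sum_congr rfl
  intro i _
  split_ifs <;> simp

lemma vol_infl (hp : ∀ e ∈ E, 0 ≤ p e ∧ p e ≤ 1) (S : Finset V) (i : V) :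
    Set.Ico (0:ℝ) 1 ∩ {u : ℝ | influenced (cScen E p S u) S i}
      = Set.Ico (dd E p S i) 1 := by
  ext u
  simp only [Set.mem_inter_iff, Set.mem_Ico, Set.mem_setOf_eq]
  constructor
  · rintro ⟨⟨hu0, hu1⟩, hinf⟩
    exact ⟨(infl_iff hp hu0 hu1 i).1 hinf, hu1⟩
  · rintro ⟨hd, hu1⟩
    have hu0 : 0 ≤ u := le_trans (dd_nonneg hp S i) hd
    exact ⟨⟨hu0, hu1⟩, (infl_iff hp hu0 hu1 i).2 hd⟩

lemma expInf_thetaStar (hp : ∀ e ∈ E, 0 ≤ p e ∧ p e ≤ 1) (S : Finset V) :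
    expInf (thetaStar E p S) S = gfun E p S := by
  rw [expInf_eq_sum_nodes, gfun]
  apply Finset.sum_congr rfl
  intro i _
  have h := sum_thetaStar (E := E) (p := p) S (fun c => influenced c S i)
  rw [vol_infl hp S i, Real.volume_Ico, ENNReal.toReal_ofReal'] at h
  rw [h, mfun, max_comm]

end StageG

section StageH

open scoped Classical

variable {E : Finset (V × V)} {p : V × V → ℝ}

lemma sum_list_swap (lst : List (V × V)) (F : (V × V) → Finset (V × V) → ℝ) :
    ∑ c : Finset (V × V), (lst.map (fun e => F e c)).sum
      = (lst.map (fun e => ∑ c : Finset (V × V), F e c)).sum := by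
  induction lst with
  | nil => simp
  | cons e t ih => simp [Finset.sum_add_distrib, ih]

lemma prob_node_ge (hp : ∀ e ∈ E, 0 ≤ p e ∧ p e ≤ 1) {θ : Finset (V × V) → ℝ}
    (hθ : memTheta E p θ) (S : Finset V) (i : V) :
    mfun E p S i ≤ ∑ c : Finset (V × V), (if influenced c S i then θ c else 0) := by
  obtain ⟨hpos, hsupp, hsum, hmarg⟩ := hθ
  have hP0 : 0 ≤ ∑ c : Finset (V × V), (if influenced c S i then θ c else 0) :=
    Finset.sum_nonneg fun c _ => by split_ifs; exacts [hpos c, le_rfl]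
  apply max_le hP0
  by_cases hne : (PathSet E S i).Nonempty
  · obtain ⟨γ, hγ, hwt⟩ := dd_attain hne
    obtain ⟨⟨s, hsS, hhead⟩, hlast, hchain, hnodup⟩ := hγ
    -- pointwise union bound
    have hpt : ∀ c : Finset (V × V),
        θ c - ((pathEdges γ).map (fun e => if e ∈ c then 0 else θ c)).sum
          ≤ (if influenced c S i then θ c else 0) := by
      intro c
      by_cases hinf : influenced c S i
      · rw [if_pos hinf]
        have : 0 ≤ ((pathEdges γ).map (fun e => if e ∈ c then 0 else θ c)).sum := by
          apply List.sum_nonneg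
          intro x hx
          obtain ⟨e, _, rfl⟩ := List.mem_map.1 hx
          split_ifs; exacts [le_rfl, hpos c]
        linarith
      · rw [if_neg hinf]
        have hex : ∃ e ∈ pathEdges γ, e ∉ c := by
          by_contra hall
          push_neg at hall
          apply hinf
          refine ⟨s, hsS, reflTransGen_of_chain' γ s i ?_ hhead hlast⟩
          exact chain'_of_pathEdges γ (fun e he => hall e he)
        obtain ⟨e₀, he₀, he₀c⟩ := hex
        have hle : θ c ≤ ((pathEdges γ).map (fun e => if e ∈ c then 0 else θ c)).sum := by
          have hmem : (if e₀ ∈ c then (0:ℝ) else θ c) ∈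
              (pathEdges γ).map (fun e => if e ∈ c then 0 else θ c) :=
            List.mem_map.2 ⟨e₀, he₀, rfl⟩
          have := List.single_le_sum (l := (pathEdges γ).map (fun e => if e ∈ c then 0 else θ c))
            (fun x hx => by
              obtain ⟨e, _, rfl⟩ := List.mem_map.1 hx
              split_ifs; exacts [le_rfl, hpos c]) _ hmem
          rwa [if_neg he₀c] at this
        linarith
    have hsum' : ∑ c : Finset (V × V),
        (θ c - ((pathEdges γ).map (fun e => if e ∈ c then 0 else θ c)).sum)
          = 1 - dd E p S i := by
      rw [Finset.sum_sub_distrib, hsum, sum_list_swap]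
      have hmap : (pathEdges γ).map (fun e => ∑ c : Finset (V × V), if e ∈ c then (0:ℝ) else θ c)
          = (pathEdges γ).map (fun e => 1 - p e) := by
        apply List.map_congr_left
        intro e he
        have heE : e ∈ E := chain'_pathEdges γ hchain e he
        have h1 : ∑ c : Finset (V × V), (if e ∈ c then (0:ℝ) else θ c)
            = (∑ c : Finset (V × V), θ c) - ∑ c : Finset (V × V), (if e ∈ c then θ c else 0) := by
          rw [← Finset.sum_sub_distrib]
          apply Finset.sum_congr rfl
          intro c _
          split_ifs <;> ring
        rw [h1, hsum, hmarg e heE]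
      rw [hmap]
      have : ((pathEdges γ).map (fun e => 1 - p e)).sum = wt p γ := rfl
      rw [this, hwt]
    calc 1 - dd E p S i
        = ∑ c : Finset (V × V),
            (θ c - ((pathEdges γ).map (fun e => if e ∈ c then 0 else θ c)).sum) := hsum'.symm
      _ ≤ _ := Finset.sum_le_sum fun c _ => hpt c
  · rw [dd_of_not_nonempty hne]
    have h0 : (0:ℝ) ≤ (Fintype.card V : ℝ) := Nat.cast_nonneg _
    linarith

lemma expInf_ge_gfun (hp : ∀ e ∈ E, 0 ≤ p e ∧ p e ≤ 1) {θ : Finset (V × V) → ℝ}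
    (hθ : memTheta E p θ) (S : Finset V) :
    gfun E p S ≤ expInf θ S := by
  rw [expInf_eq_sum_nodes, gfun]
  exact Finset.sum_le_sum fun i _ => prob_node_ge hp hθ S i

lemma fcorr_eq_gfun (hp : ∀ e ∈ E, 0 ≤ p e ∧ p e ≤ 1) (S : Finset V) :
    fcorr E p S = gfun E p S := by
  have hmem : expInf (thetaStar E p S) S ∈
      {x : ℝ | ∃ θ, memTheta E p θ ∧ x = expInf θ S} :=
    ⟨thetaStar E p S, thetaStar_memTheta hp S, rfl⟩
  apply le_antisymm
  · rw [← expInf_thetaStar hp S]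
    apply csInf_le _ hmem
    refine ⟨0, ?_⟩
    rintro x ⟨θ, hθ, rfl⟩
    exact expInf_nonneg hθ.1 S
  · apply le_csInf ⟨_, hmem⟩
    rintro x ⟨θ, hθ, rfl⟩
    exact expInf_ge_gfun hp hθ S

end StageH


/-- the greedy algorithm for maximizing `f^corr` achieves a
`(1 - 1/e)` approximation guarantee. -/
theorem greedy_guarantee (E : Finset (V × V)) (p : V × V → ℝ)
    (hp : ∀ e ∈ E, 0 ≤ p e ∧ p e ≤ 1)
    (k : ℕ) (hk1 : 1 ≤ k) (hk : k ≤ Fintype.card V)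
    (Sg : ℕ → Finset V) (h0 : Sg 0 = ∅)
    (hstep : ∀ i < k, ∃ v ∉ Sg i, Sg (i + 1) = insert v (Sg i) ∧
      ∀ w ∉ Sg i, fcorr E p (insert w (Sg i)) ≤ fcorr E p (insert v (Sg i))) :
    ∀ S : Finset V, S.card ≤ k →
      (1 - 1 / Real.exp 1) * fcorr E p S ≤ fcorr E p (Sg k) := by
  intro S hS
  rw [fcorr_eq_gfun hp, fcorr_eq_gfun hp]
  have hk0 : (0:ℝ) < (k:ℝ) := by exact_mod_cast hk1
  have hnn : (0:ℝ) ≤ 1 - 1/(k:ℝ) := by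
    have h1k : 1/(k:ℝ) ≤ 1 := by
      rw [div_le_one hk0]
      exact_mod_cast hk1
    linarith
  have hchain : ∀ i, i < k → Sg i ⊆ Sg (i+1) := by
    intro i hi
    obtain ⟨v, _, hSgi, _⟩ := hstep i hi
    rw [hSgi]
    exact Finset.subset_insert _ _
  have hstep' : ∀ i, i < k →
      gfun E p S - gfun E p (Sg (i+1)) ≤
        (1 - 1/(k:ℝ)) * (gfun E p S - gfun E p (Sg i)) := by
    intro i hi
    obtain ⟨v, hv, hSgi, hbest⟩ := hstep i hi
    have hsub : Sg i ⊆ Sg (i+1) := by rw [hSgi]; exact Finset.subset_insert _ _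
    have hδ0 : 0 ≤ gfun E p (Sg (i+1)) - gfun E p (Sg i) := by
      linarith [gfun_mono hp hsub]
    have hcov := gfun_cover hp (Sg i) S
    have hterm : ∀ w' ∈ S \ Sg i,
        gfun E p (insert w' (Sg i)) - gfun E p (Sg i) ≤
          gfun E p (Sg (i+1)) - gfun E p (Sg i) := by
      intro w' hw'
      have hw'ni : w' ∉ Sg i := (Finset.mem_sdiff.1 hw').2
      have h1 := hbest w' hw'ni
      rw [fcorr_eq_gfun hp, fcorr_eq_gfun hp] at h1
      rw [hSgi]
      linarith
    have hsumle := Finset.sum_le_card_nsmul (S \ Sg i)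
      (fun w' => gfun E p (insert w' (Sg i)) - gfun E p (Sg i))
      (gfun E p (Sg (i+1)) - gfun E p (Sg i)) hterm
    rw [nsmul_eq_mul] at hsumle
    have hcard : (((S \ Sg i).card : ℕ) : ℝ) ≤ (k:ℝ) := by
      exact_mod_cast le_trans (Finset.card_le_card Finset.sdiff_subset) hS
    have hmul : (((S \ Sg i).card : ℕ) : ℝ) * (gfun E p (Sg (i+1)) - gfun E p (Sg i))
        ≤ (k:ℝ) * (gfun E p (Sg (i+1)) - gfun E p (Sg i)) :=
      mul_le_mul_of_nonneg_right hcard hδ0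
    have hkey : gfun E p S - gfun E p (Sg i) ≤
        (k:ℝ) * (gfun E p (Sg (i+1)) - gfun E p (Sg i)) := by linarith
    have hdiv : (gfun E p S - gfun E p (Sg i)) / (k:ℝ) ≤
        gfun E p (Sg (i+1)) - gfun E p (Sg i) := by
      rw [div_le_iff₀ hk0]
      calc gfun E p S - gfun E p (Sg i)
          ≤ (k:ℝ) * (gfun E p (Sg (i+1)) - gfun E p (Sg i)) := hkey
        _ = (gfun E p (Sg (i+1)) - gfun E p (Sg i)) * (k:ℝ) := mul_comm _ _
    have heq : (1 - 1/(k:ℝ)) * (gfun E p S - gfun E p (Sg i))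
        = (gfun E p S - gfun E p (Sg i)) - (gfun E p S - gfun E p (Sg i)) / (k:ℝ) := by
      field_simp
    linarith
  have hind : ∀ j, j ≤ k →
      gfun E p S - gfun E p (Sg j) ≤
        (1 - 1/(k:ℝ))^j * (gfun E p S - gfun E p (Sg 0)) := by
    intro j
    induction j with
    | zero => intro _; simp
    | succ n ih =>
      intro hn
      have hn' : n < k := Nat.lt_of_succ_le hn
      calc gfun E p S - gfun E p (Sg (n+1))
          ≤ (1 - 1/(k:ℝ)) * (gfun E p S - gfun E p (Sg n)) := hstep' n hn'
        _ ≤ (1 - 1/(k:ℝ)) * ((1 - 1/(k:ℝ))^n * (gfun E p S - gfun E p (Sg 0))) :=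
            mul_le_mul_of_nonneg_left (ih (le_of_lt hn')) hnn
        _ = (1 - 1/(k:ℝ))^(n+1) * (gfun E p S - gfun E p (Sg 0)) := by ring
  have hak := hind k le_rfl
  rw [h0] at hak
  have hexp : (1 - 1/(k:ℝ))^k ≤ Real.exp (-1) := by
    have h1 : (1 - 1/(k:ℝ)) ≤ Real.exp (-(1/(k:ℝ))) := by
      have := Real.add_one_le_exp (-(1/(k:ℝ)))
      linarith
    have h2 : (1 - 1/(k:ℝ))^k ≤ Real.exp (-(1/(k:ℝ)))^k :=
      pow_le_pow_left₀ hnn h1 k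
    have h3 : Real.exp (-(1/(k:ℝ)))^k = Real.exp (-1) := by
      rw [← Real.exp_nat_mul]
      congr 1
      field_simp
    rw [h3] at h2
    exact h2
  have h1e : 1/Real.exp 1 = Real.exp (-1) := by
    rw [Real.exp_neg, one_div]
  have hSg0k : Sg 0 ⊆ Sg k := by
    have : ∀ j, j ≤ k → Sg 0 ⊆ Sg j := by
      intro j
      induction j with
      | zero => intro _; exact subset_rfl
      | succ n ih =>
        intro hn
        exact (ih (le_of_lt (Nat.lt_of_succ_le hn))).trans (hchain n (Nat.lt_of_succ_le hn))
    exact this k le_rfl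
  have hgS0 : 0 ≤ gfun E p (Sg 0) := gfun_nonneg _
  rw [h0] at hgS0 hSg0k
  have hgSnn : 0 ≤ gfun E p S := gfun_nonneg _
  by_cases hA : 0 ≤ gfun E p S - gfun E p ∅
  · have hmul1 : (1 - 1/(k:ℝ))^k * (gfun E p S - gfun E p ∅)
        ≤ Real.exp (-1) * (gfun E p S - gfun E p ∅) :=
      mul_le_mul_of_nonneg_right hexp hA
    have hAle : gfun E p S - gfun E p ∅ ≤ gfun E p S := by linarith
    have hmul2 : Real.exp (-1) * (gfun E p S - gfun E p ∅)
        ≤ Real.exp (-1) * gfun E p S :=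
      mul_le_mul_of_nonneg_left hAle (le_of_lt (Real.exp_pos _))
    nlinarith [hak, hmul1, hmul2]
  · push_neg at hA
    have hB : gfun E p ∅ ≤ gfun E p (Sg k) := gfun_mono hp hSg0k
    have hfac : (1 - 1/Real.exp 1) * gfun E p S ≤ gfun E p S := by
      have hepos : 0 < 1/Real.exp 1 := by positivity
      nlinarith
    linarith

end CorrIM
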